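/- Let ρ be a p×p complex matrix with operator norm ‖ρ‖ < 1. Define the Halmos extension C := D·F, where D = diag{(I_p − ρρ*)^{−1/2}, (I_p − ρ*ρ)^{−1/2}} and F = [[I_p, ρ],[ρ*, I_p]] (2p×2p block matrices), and set j := diag{I_p, −I_p}. Then C = C*, C is positive definite, and C j C = j. Moreover, the upper-left p×p block C_{11} of C is invertible and (C_{11})^{−1} C_{12} = ρ, where C_{12} is the upper-right p×p block; thus ρ is recovered from C. -/

import Mathlib

open Matrix
open scoped ComplexOrder

noncomputable section

section AuxLemmas
open Polynomial

lemma aeval_intertwine {R A : Type*} [CommSemiring R] [Semiring A] [Algebra R A]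
    (a b c : A) (h : a * b = c * a) (q : R[X]) :
    a * (aeval b q) = (aeval c q) * a := by
  have hpow : ∀ k : ℕ, a * b ^ k = c ^ k * a := by
    intro k; induction k with
    | zero => simp
    | succ k ih => rw [pow_succ, pow_succ, ← mul_assoc, ih, mul_assoc, h, ← mul_assoc]
  induction q using Polynomial.induction_on' with
  | add p q hp hq => simp only [map_add, mul_add, add_mul, hp, hq]
  | monomial k r =>
    rw [aeval_monomial, aeval_monomial]
    calc a * (algebraMap R A r * b ^ k)
        = algebraMap R A r * (a * b ^ k) := by
          rw [← mul_assoc, ← Algebra.commutes r a, mul_assoc]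
      _ = algebraMap R A r * c ^ k * a := by rw [hpow, mul_assoc]

lemma aeval_conj {R A : Type*} [CommSemiring R] [Semiring A] [Algebra R A]
    (u v x : A) (h1 : u * v = 1) (h2 : v * u = 1) (q : R[X]) :
    aeval (u * x * v) q = u * (aeval x q) * v := by
  have h : u * x = (u * x * v) * u := by
    rw [mul_assoc, mul_assoc, h2, mul_one]
  have key := aeval_intertwine u x (u * x * v) h q
  symm
  rw [key, mul_assoc, h1, mul_one]

lemma aeval_diagonal {n : Type*} [Fintype n] [DecidableEq n] (d : n → ℂ) (Q : ℂ[X]) :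
    aeval (Matrix.diagonal d) Q = Matrix.diagonal (fun i => aeval (d i) Q) := by
  have h1 : aeval (Matrix.diagonalAlgHom (n := n) ℂ d) Q
      = Matrix.diagonalAlgHom (n := n) ℂ (aeval d Q) :=
    (aeval_algHom_apply (Matrix.diagonalAlgHom (n := n) ℂ) d Q)
  simp only [Matrix.diagonalAlgHom_apply] at h1
  rw [h1]
  have h2 : aeval d Q = fun i => aeval (d i) Q :=
    funext fun i => (aeval_algHom_apply (Pi.evalAlgHom ℂ (fun _ => ℂ) i) d Q).symm
  rw [h2]

def psdSqrt {n : Type*} [Fintype n] [DecidableEq n] {X : Matrix n n ℂ}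
    (h : X.PosSemidef) : Matrix n n ℂ :=
  (h.1.eigenvectorUnitary : Matrix n n ℂ) *
    diagonal ((RCLike.ofReal : ℝ → ℂ) ∘ Real.sqrt ∘ h.1.eigenvalues) *
    (star h.1.eigenvectorUnitary : Matrix n n ℂ)

lemma psdSqrt_mul_self {n : Type*} [Fintype n] [DecidableEq n] {X : Matrix n n ℂ}
    (h : X.PosSemidef) : psdSqrt h * psdSqrt h = X := by
  have h2 : star (h.1.eigenvectorUnitary : Matrix n n ℂ) *
      (h.1.eigenvectorUnitary : Matrix n n ℂ) = 1 :=
    (Matrix.mem_unitaryGroup_iff').mp h.1.eigenvectorUnitary.2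
  have hd : diagonal ((RCLike.ofReal : ℝ → ℂ) ∘ Real.sqrt ∘ h.1.eigenvalues) *
      diagonal ((RCLike.ofReal : ℝ → ℂ) ∘ Real.sqrt ∘ h.1.eigenvalues)
      = diagonal ((RCLike.ofReal : ℝ → ℂ) ∘ h.1.eigenvalues) := by
    rw [diagonal_mul_diagonal]
    congr 1
    funext i
    show ((Real.sqrt (h.1.eigenvalues i) : ℂ)) * (Real.sqrt (h.1.eigenvalues i) : ℂ)
      = (h.1.eigenvalues i : ℂ)
    rw [← Complex.ofReal_mul, Real.mul_self_sqrt (h.eigenvalues_nonneg i)]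
  conv_rhs => rw [h.1.spectral_theorem, Unitary.conjStarAlgAut_apply]
  unfold psdSqrt
  rw [show ∀ u D v : Matrix n n ℂ, u * D * v * (u * D * v) = u * (D * (v * u) * D) * v by
    intro u D v; simp only [mul_assoc], h2, mul_one, hd]

lemma posSemidef_psdSqrt {n : Type*} [Fintype n] [DecidableEq n] {X : Matrix n n ℂ}
    (h : X.PosSemidef) : (psdSqrt h).PosSemidef := by
  have hD : (diagonal ((RCLike.ofReal : ℝ → ℂ) ∘ Real.sqrt ∘ h.1.eigenvalues)).PosSemidef :=
    Matrix.PosSemidef.diagonal (fun i => by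
      show (0 : ℂ) ≤ ((Real.sqrt (h.1.eigenvalues i) : ℝ) : ℂ)
      exact_mod_cast Real.sqrt_nonneg _)
  have := hD.mul_mul_conjTranspose_same (h.1.eigenvectorUnitary : Matrix n n ℂ)
  unfold psdSqrt
  rwa [← Matrix.star_eq_conjTranspose] at this

lemma aeval_eq_sqrt {n : Type*} [Fintype n] [DecidableEq n] {X : Matrix n n ℂ}
    (hX : X.PosSemidef) (q : ℝ[X])
    (hq : ∀ i, q.eval (hX.1.eigenvalues i) = Real.sqrt (hX.1.eigenvalues i)) :
    aeval X (q.map (algebraMap ℝ ℂ)) = psdSqrt hX := by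
  set u : Matrix n n ℂ := (hX.1.eigenvectorUnitary : Matrix n n ℂ) with hu
  have h1 : u * star u = 1 := (Matrix.mem_unitaryGroup_iff).mp hX.1.eigenvectorUnitary.2
  have h2 : star u * u = 1 := (Matrix.mem_unitaryGroup_iff').mp hX.1.eigenvectorUnitary.2
  conv_lhs => rw [hX.1.spectral_theorem, Unitary.conjStarAlgAut_apply]
  rw [aeval_conj u (star u) _ h1 h2, aeval_diagonal]
  have hd : (fun i => aeval ((RCLike.ofReal ∘ hX.1.eigenvalues) i) (q.map (algebraMap ℝ ℂ)))
      = ((RCLike.ofReal ∘ Real.sqrt ∘ hX.1.eigenvalues : n → ℂ)) := by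
    funext i
    simp only [Function.comp_apply]
    rw [show ((RCLike.ofReal (hX.1.eigenvalues i)) : ℂ) = algebraMap ℝ ℂ (hX.1.eigenvalues i)
        from rfl,
      aeval_map_algebraMap, aeval_algebraMap_apply, coe_aeval_eq_eval, hq i]
  rw [hd, psdSqrt]

lemma sqrt_intertwine {n : Type*} [Fintype n] [DecidableEq n] (ρ : Matrix n n ℂ)
    (hS : (1 - ρ * ρᴴ).PosSemidef) (hT : (1 - ρᴴ * ρ).PosSemidef) :
    ρ * psdSqrt hT = psdSqrt hS * ρ := by
  classical
  set s : Finset ℝ :=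
    Finset.image hS.1.eigenvalues Finset.univ ∪ Finset.image hT.1.eigenvalues Finset.univ with hs
  set q : Polynomial ℝ := Lagrange.interpolate s id Real.sqrt with hqdef
  have hq : ∀ x ∈ s, q.eval x = Real.sqrt x := by
    intro x hx
    exact Lagrange.eval_interpolate_at_node Real.sqrt (Set.injOn_id _) hx
  have h1 : aeval (1 - ρ * ρᴴ) (q.map (algebraMap ℝ ℂ)) = psdSqrt hS :=
    aeval_eq_sqrt hS q fun i => hq _ (Finset.mem_union_left _
      (Finset.mem_image.mpr ⟨i, Finset.mem_univ i, rfl⟩))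
  have h2 : aeval (1 - ρᴴ * ρ) (q.map (algebraMap ℝ ℂ)) = psdSqrt hT :=
    aeval_eq_sqrt hT q fun i => hq _ (Finset.mem_union_right _
      (Finset.mem_image.mpr ⟨i, Finset.mem_univ i, rfl⟩))
  have h3 : ρ * (1 - ρᴴ * ρ) = (1 - ρ * ρᴴ) * ρ := by noncomm_ring
  rw [← h1, ← h2]
  exact aeval_intertwine ρ _ _ h3 _

lemma posSemidef_isUnit_posDef {n : Type*} [Fintype n] [DecidableEq n]
    {M : Matrix n n ℂ} (h : M.PosSemidef) (hu : IsUnit M) : M.PosDef := by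
  refine Matrix.PosDef.of_dotProduct_mulVec_pos h.1
    fun x hx => lt_of_le_of_ne (h.dotProduct_mulVec_nonneg x) (Ne.symm fun h0 => hx ?_)
  have hMx : M *ᵥ x = 0 := (h.dotProduct_mulVec_zero_iff x).mp h0
  have hinj : Function.Injective M.mulVec := Matrix.mulVec_injective_iff_isUnit.mpr hu
  apply hinj
  simpa using hMx

set_option synthInstance.maxHeartbeats 1000000 in
set_option maxHeartbeats 2000000 in
lemma posDef_one_sub_mul_conjTranspose {p : ℕ} (ρ : Matrix (Fin p) (Fin p) ℂ)
    (hρ : ‖Matrix.toEuclideanCLM (𝕜 := ℂ) ρ‖ < 1) :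
    (1 - ρ * ρᴴ).PosDef := by
  refine Matrix.PosDef.of_dotProduct_mulVec_pos
    ((Matrix.isHermitian_one).sub (Matrix.isHermitian_mul_conjTranspose_self ρ)) ?_
  intro x hx
  have e1 : star x ⬝ᵥ ((ρ * ρᴴ) *ᵥ x) = star (ρᴴ *ᵥ x) ⬝ᵥ (ρᴴ *ᵥ x) := by
    rw [← Matrix.mulVec_mulVec, Matrix.dotProduct_mulVec, Matrix.star_mulVec,
      Matrix.conjTranspose_conjTranspose]
  set x' : EuclideanSpace ℂ (Fin p) := (WithLp.equiv 2 _).symm x with hx'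
  set y' : EuclideanSpace ℂ (Fin p) := (WithLp.equiv 2 _).symm (ρᴴ *ᵥ x) with hy'
  have hxx : star x ⬝ᵥ x = (‖x'‖ : ℂ) ^ 2 := by
    have := inner_self_eq_norm_sq_to_K (𝕜 := ℂ) x'
    rw [EuclideanSpace.inner_eq_star_dotProduct] at this
    rw [dotProduct_comm]; exact this
  have hyy : star (ρᴴ *ᵥ x) ⬝ᵥ (ρᴴ *ᵥ x) = (‖y'‖ : ℂ) ^ 2 := by
    have := inner_self_eq_norm_sq_to_K (𝕜 := ℂ) y'
    rw [EuclideanSpace.inner_eq_star_dotProduct] at this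
    rw [dotProduct_comm]; exact this
  have hyx : y' = Matrix.toEuclideanCLM (𝕜 := ℂ) ρᴴ x' := by
    exact rfl
  have hnorm : ‖Matrix.toEuclideanCLM (𝕜 := ℂ) ρᴴ‖ < 1 := by
    have h1 : Matrix.toEuclideanCLM (𝕜 := ℂ) ρᴴ = star (Matrix.toEuclideanCLM (𝕜 := ℂ) ρ) := by
      rw [← Matrix.star_eq_conjTranspose, map_star]
    rw [h1, ContinuousLinearMap.star_eq_adjoint]
    exact (ContinuousLinearMap.adjoint.norm_map _).trans_lt hρ
  have hx'0 : x' ≠ 0 := by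
    intro h0
    apply hx
    have := congrArg (WithLp.equiv 2 (Fin p → ℂ)) h0
    simpa [hx'] using this
  have hx'pos : 0 < ‖x'‖ := norm_pos_iff.mpr hx'0
  have hy'le : ‖y'‖ ≤ ‖Matrix.toEuclideanCLM (𝕜 := ℂ) ρᴴ‖ * ‖x'‖ := by
    rw [hyx]; exact ContinuousLinearMap.le_opNorm _ _
  have hN0 : (0:ℝ) ≤ ‖Matrix.toEuclideanCLM (𝕜 := ℂ) ρᴴ‖ := norm_nonneg _
  have h2 : ‖y'‖ ^ 2 ≤ (‖Matrix.toEuclideanCLM (𝕜 := ℂ) ρᴴ‖ * ‖x'‖) ^ 2 :=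
    pow_le_pow_left₀ (norm_nonneg y') hy'le 2
  have hreal : ‖y'‖ ^ 2 < ‖x'‖ ^ 2 := by
    have hN2 : ‖Matrix.toEuclideanCLM (𝕜 := ℂ) ρᴴ‖ ^ 2 < 1 := by nlinarith
    nlinarith [pow_pos hx'pos 2]
  have : star x ⬝ᵥ ((1 - ρ * ρᴴ) *ᵥ x)
      = ((‖x'‖ ^ 2 - ‖y'‖ ^ 2 : ℝ) : ℂ) := by
    rw [Matrix.sub_mulVec, dotProduct_sub, Matrix.one_mulVec, hxx, e1, hyy]
    push_cast
    ring
  rw [this]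
  exact_mod_cast Complex.zero_lt_real.mpr (by linarith)


end AuxLemmas

/-- `X^{-1/2}` for a positive semidefinite matrix `X` (junk value `0` otherwise). -/
def invSqrt {p : ℕ} (X : Matrix (Fin p) (Fin p) ℂ) : Matrix (Fin p) (Fin p) ℂ :=
  open scoped Classical in
  if h : X.PosSemidef then
    ((h.1.eigenvectorUnitary : Matrix (Fin p) (Fin p) ℂ) *
      diagonal ((RCLike.ofReal : ℝ → ℂ) ∘ Real.sqrt ∘ h.1.eigenvalues) *
      (star h.1.eigenvectorUnitary : Matrix (Fin p) (Fin p) ℂ))⁻¹ else 0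

/-- The Halmos extension `C = D F` of a strictly contractive `p × p` matrix `ρ`. -/
def halmos {p : ℕ} (ρ : Matrix (Fin p) (Fin p) ℂ) :
    Matrix (Fin p ⊕ Fin p) (Fin p ⊕ Fin p) ℂ :=
  Matrix.fromBlocks (invSqrt (1 - ρ * ρᴴ)) 0 0 (invSqrt (1 - ρᴴ * ρ)) *
    Matrix.fromBlocks 1 ρ ρᴴ 1

/-- properties of the Halmos extension `C` of a strict contraction `ρ`:
`C = C^* > 0`, `C j C = j`, and `ρ` is recovered via `ρ = (C₁₁)⁻¹ C₁₂`. -/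
theorem halmos_extension_properties
    {p : ℕ} (hp : 1 ≤ p) (ρ : Matrix (Fin p) (Fin p) ℂ)
    (hρ : ‖Matrix.toEuclideanCLM (𝕜 := ℂ) ρ‖ < 1) :
    (halmos ρ)ᴴ = halmos ρ ∧
    (halmos ρ).PosDef ∧
    halmos ρ * (Matrix.fromBlocks 1 0 0 (-1) : Matrix (Fin p ⊕ Fin p) (Fin p ⊕ Fin p) ℂ) *
        halmos ρ = Matrix.fromBlocks 1 0 0 (-1) ∧
    IsUnit ((halmos ρ).toBlocks₁₁) ∧
    ((halmos ρ).toBlocks₁₁)⁻¹ * (halmos ρ).toBlocks₁₂ = ρ := by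
  classical
  have hS : (1 - ρ * ρᴴ).PosDef := posDef_one_sub_mul_conjTranspose ρ hρ
  have hT : (1 - ρᴴ * ρ).PosDef := by
    have h1 : ‖Matrix.toEuclideanCLM (𝕜 := ℂ) ρᴴ‖ < 1 := by
      have h2 : Matrix.toEuclideanCLM (𝕜 := ℂ) ρᴴ = star (Matrix.toEuclideanCLM (𝕜 := ℂ) ρ) := by
        rw [← Matrix.star_eq_conjTranspose, map_star]
      rw [h2, ContinuousLinearMap.star_eq_adjoint]
      exact (ContinuousLinearMap.adjoint.norm_map _).trans_lt hρ
    simpa using posDef_one_sub_mul_conjTranspose ρᴴ h1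
  set a := psdSqrt hS.posSemidef with hadef
  set b := psdSqrt hT.posSemidef with hbdef
  have haa : a * a = 1 - ρ * ρᴴ := psdSqrt_mul_self hS.posSemidef
  have hbb : b * b = 1 - ρᴴ * ρ := psdSqrt_mul_self hT.posSemidef
  have hadet : IsUnit a.det := by
    have h1 : a.det * a.det = (1 - ρ * ρᴴ).det := by rw [← Matrix.det_mul, haa]
    have h2 : (1 - ρ * ρᴴ).det ≠ 0 := hS.det_pos.ne'
    exact isUnit_iff_ne_zero.mpr (fun h => h2 (by rw [← h1, h, mul_zero]))
  have hbdet : IsUnit b.det := by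
    have h1 : b.det * b.det = (1 - ρᴴ * ρ).det := by rw [← Matrix.det_mul, hbb]
    have h2 : (1 - ρᴴ * ρ).det ≠ 0 := hT.det_pos.ne'
    exact isUnit_iff_ne_zero.mpr (fun h => h2 (by rw [← h1, h, mul_zero]))
  have hapos : a.PosDef := posSemidef_isUnit_posDef (posSemidef_psdSqrt hS.posSemidef)
    ((Matrix.isUnit_iff_isUnit_det a).mpr hadet)
  have hbpos : b.PosDef := posSemidef_isUnit_posDef (posSemidef_psdSqrt hT.posSemidef)
    ((Matrix.isUnit_iff_isUnit_det b).mpr hbdet)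
  set A := a⁻¹ with hAdef
  set B := b⁻¹ with hBdef
  have hApos : A.PosDef := hapos.inv
  have hBpos : B.PosDef := hbpos.inv
  have hAdet : IsUnit A.det := (Matrix.isUnit_iff_isUnit_det A).mp hApos.isUnit
  have key : ρ * b = a * ρ := sqrt_intertwine ρ hS.posSemidef hT.posSemidef
  have f1 : ρ * B = A * ρ := by
    have h1 : a⁻¹ * (ρ * b) * b⁻¹ = a⁻¹ * (a * ρ) * b⁻¹ := by rw [key]
    have hL : a⁻¹ * (ρ * b) * b⁻¹ = a⁻¹ * ρ := by
      rw [← mul_assoc a⁻¹ ρ b, mul_assoc (a⁻¹ * ρ) b b⁻¹, Matrix.mul_nonsing_inv b hbdet,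
        mul_one]
    have hR : a⁻¹ * (a * ρ) * b⁻¹ = ρ * b⁻¹ := by
      rw [← mul_assoc a⁻¹ a ρ, Matrix.nonsing_inv_mul a hadet, one_mul]
    show ρ * b⁻¹ = a⁻¹ * ρ
    exact (hL.symm.trans (h1.trans hR)).symm
  have f2 : ρᴴ * A = B * ρᴴ := by
    have h1 := congrArg Matrix.conjTranspose f1
    rw [Matrix.conjTranspose_mul, Matrix.conjTranspose_mul, hApos.1.eq, hBpos.1.eq] at h1
    exact h1.symm
  have hSdet : IsUnit (1 - ρ * ρᴴ).det := (Matrix.isUnit_iff_isUnit_det _).mp hS.isUnit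
  have hTdet : IsUnit (1 - ρᴴ * ρ).det := (Matrix.isUnit_iff_isUnit_det _).mp hT.isUnit
  have f3 : A * A * (1 - ρ * ρᴴ) = 1 := by
    rw [hAdef, ← Matrix.mul_inv_rev, haa]
    exact Matrix.nonsing_inv_mul _ hSdet
  have f5 : B * B * (1 - ρᴴ * ρ) = 1 := by
    rw [hBdef, ← Matrix.mul_inv_rev, hbb]
    exact Matrix.nonsing_inv_mul _ hTdet
  have g5 : B * (1 - ρᴴ * ρ) = b := by
    rw [hBdef, ← hbb, ← mul_assoc, Matrix.nonsing_inv_mul b hbdet, one_mul]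
  have hhal : halmos ρ = Matrix.fromBlocks A (A * ρ) (B * ρᴴ) B := by
    have hA' : invSqrt (1 - ρ * ρᴴ) = A := by
      unfold invSqrt
      rw [dif_pos hS.posSemidef]
      rfl
    have hB' : invSqrt (1 - ρᴴ * ρ) = B := by
      unfold invSqrt
      rw [dif_pos hT.posSemidef]
      rfl
    unfold halmos
    rw [hA', hB', Matrix.fromBlocks_multiply]
    simp
  have hjj : (Matrix.fromBlocks 1 0 0 (-1) : Matrix (Fin p ⊕ Fin p) (Fin p ⊕ Fin p) ℂ) *
      Matrix.fromBlocks 1 0 0 (-1) = 1 := by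
    rw [Matrix.fromBlocks_multiply]
    simp [← Matrix.fromBlocks_one]
  have hj : halmos ρ * (Matrix.fromBlocks 1 0 0 (-1) :
      Matrix (Fin p ⊕ Fin p) (Fin p ⊕ Fin p) ℂ) * halmos ρ = Matrix.fromBlocks 1 0 0 (-1) := by
    rw [hhal, Matrix.fromBlocks_multiply, Matrix.fromBlocks_multiply]
    simp only [Matrix.mul_zero, Matrix.zero_mul, Matrix.mul_one, Matrix.one_mul,
      add_zero, zero_add, Matrix.mul_neg, Matrix.neg_mul]
    have i11 : A * A + -(A * ρ * (B * ρᴴ)) = 1 := by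
      rw [mul_assoc A ρ (B * ρᴴ), ← mul_assoc ρ B ρᴴ, f1]
      have h := f3
      rw [mul_sub, mul_one, mul_assoc A A (ρ * ρᴴ), ← mul_assoc A ρ ρᴴ,
        sub_eq_add_neg] at h
      exact h
    have i12 : A * (A * ρ) + -(A * ρ * B) = 0 := by
      rw [mul_assoc A ρ B, f1, add_neg_cancel]
    have i21 : B * ρᴴ * A + -(B * (B * ρᴴ)) = 0 := by
      rw [mul_assoc B ρᴴ A, f2, add_neg_cancel]
    have i22 : B * ρᴴ * (A * ρ) + -(B * B) = -1 := by
      rw [mul_assoc B ρᴴ (A * ρ), ← mul_assoc ρᴴ A ρ, f2]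
      have h := f5
      rw [mul_sub, mul_one] at h
      have h2 := congrArg Neg.neg h
      rw [neg_sub, sub_eq_add_neg, mul_assoc B B (ρᴴ * ρ), ← mul_assoc B ρᴴ ρ] at h2
      exact h2
    rw [i11, i12, i21, i22]
  have hherm : (halmos ρ)ᴴ = halmos ρ := by
    rw [hhal, Matrix.fromBlocks_conjTranspose]
    simp only [Matrix.conjTranspose_mul, Matrix.conjTranspose_conjTranspose,
      hApos.1.eq, hBpos.1.eq]
    rw [f1, f2]
  have hps : (halmos ρ).PosSemidef := by
    rw [hhal]
    have hblk : B * ρᴴ = (A * ρ)ᴴ := by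
      rw [Matrix.conjTranspose_mul, hApos.1.eq]
      exact f2.symm
    rw [hblk]
    haveI := hApos.isUnit.invertible
    rw [Matrix.PosDef.fromBlocks₁₁ _ _ hApos]
    have e : (A * ρ)ᴴ * A⁻¹ * (A * ρ) = B * (ρᴴ * ρ) := by
      rw [Matrix.conjTranspose_mul, hApos.1.eq, mul_assoc ρᴴ A A⁻¹,
        Matrix.mul_nonsing_inv A hAdet, mul_one, ← mul_assoc, f2, mul_assoc]
    rw [e]
    have e2 : B - B * (ρᴴ * ρ) = b := by
      have h := g5
      rw [mul_sub, mul_one] at h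
      exact h
    rw [e2]
    exact posSemidef_psdSqrt hT.posSemidef
  have hunitC : IsUnit (halmos ρ) := by
    rw [Matrix.isUnit_iff_isUnit_det]
    have h := congrArg Matrix.det hj
    rw [Matrix.det_mul, Matrix.det_mul] at h
    have hjne : (Matrix.fromBlocks 1 0 0 (-1) :
        Matrix (Fin p ⊕ Fin p) (Fin p ⊕ Fin p) ℂ).det ≠ 0 := by
      rw [Matrix.det_fromBlocks_zero₂₁]
      simp [Matrix.det_neg]
    have h2 : (halmos ρ).det * (halmos ρ).det = 1 := by
      have h3 : ((halmos ρ).det * (halmos ρ).det) * (Matrix.fromBlocks 1 0 0 (-1) :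
          Matrix (Fin p ⊕ Fin p) (Fin p ⊕ Fin p) ℂ).det = 1 * (Matrix.fromBlocks 1 0 0 (-1) :
          Matrix (Fin p ⊕ Fin p) (Fin p ⊕ Fin p) ℂ).det := by
        calc ((halmos ρ).det * (halmos ρ).det) * (Matrix.fromBlocks 1 0 0 (-1) :
              Matrix (Fin p ⊕ Fin p) (Fin p ⊕ Fin p) ℂ).det
            = (halmos ρ).det * (Matrix.fromBlocks 1 0 0 (-1) :
              Matrix (Fin p ⊕ Fin p) (Fin p ⊕ Fin p) ℂ).det * (halmos ρ).det := by ring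
          _ = (Matrix.fromBlocks 1 0 0 (-1) :
              Matrix (Fin p ⊕ Fin p) (Fin p ⊕ Fin p) ℂ).det := h
          _ = 1 * _ := (one_mul _).symm
      exact mul_right_cancel₀ hjne h3
    exact IsUnit.of_mul_eq_one _ h2
  have htb1 : (halmos ρ).toBlocks₁₁ = A := by rw [hhal, Matrix.toBlocks_fromBlocks₁₁]
  have htb2 : (halmos ρ).toBlocks₁₂ = A * ρ := by rw [hhal, Matrix.toBlocks_fromBlocks₁₂]
  refine ⟨hherm, posSemidef_isUnit_posDef hps hunitC, hj, ?_, ?_⟩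
  · rw [htb1]; exact hApos.isUnit
  · rw [htb1, htb2, ← mul_assoc, Matrix.nonsing_inv_mul A hAdet, one_mul]

end
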